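/- For discrete EOT with N strictly positive cost matrices C_i, any minimizer (P_1*,...,P_N*) of max_i ⟨P_i, C_i⟩ over Γ^N_{a,b} satisfies ⟨P_i*, C_i⟩ = ⟨P_j*, C_j⟩ for all i, j (the optimal solution equalizes all agents' costs). -/

import Mathlib

open Finset

/-- Frobenius inner product of two matrices. -/
def dot {n m : ℕ} (P C : Matrix (Fin n) (Fin m) ℝ) : ℝ := ∑ i, ∑ j, P i j * C i j

/-- `P` is a coupling of the probability vectors `a` and `b`. -/
def IsCoupling {n m : ℕ} (a : Fin n → ℝ) (b : Fin m → ℝ)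
    (P : Matrix (Fin n) (Fin m) ℝ) : Prop :=
  (∀ i j, 0 ≤ P i j) ∧ (∀ i, ∑ j, P i j = a i) ∧ (∀ j, ∑ i, P i j = b j)

/-- Discrete optimal transport value. -/
noncomputable def W {n m : ℕ} (a : Fin n → ℝ) (b : Fin m → ℝ)
    (C : Matrix (Fin n) (Fin m) ℝ) : ℝ :=
  sInf {t | ∃ P, IsCoupling a b P ∧ t = dot P C}

/-- The constraint set `Γ^N_{a,b}` of coupling decompositions. -/
def Gamma (N : ℕ) {n m : ℕ} (a : Fin n → ℝ) (b : Fin m → ℝ) :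
    Set (Fin N → Matrix (Fin n) (Fin m) ℝ) :=
  {P | (∀ k i j, 0 ≤ P k i j) ∧ (∀ i, ∑ k, ∑ j, P k i j = a i) ∧
       (∀ j, ∑ k, ∑ i, P k i j = b j)}

/-- Discrete equitable optimal transport value. -/
noncomputable def EOT {N n m : ℕ} (a : Fin n → ℝ) (b : Fin m → ℝ)
    (C : Fin N → Matrix (Fin n) (Fin m) ℝ) : ℝ :=
  sInf {t | ∃ P ∈ Gamma N a b, t = ⨆ i, dot (P i) (C i)}

/- ------------------ Auxiliary lemmas ------------------ -/

lemma dot_nonneg' {n m : ℕ} {P C : Matrix (Fin n) (Fin m) ℝ}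
    (hP : ∀ i j, 0 ≤ P i j) (hC : ∀ i j, 0 ≤ C i j) : 0 ≤ dot P C :=
  Finset.sum_nonneg fun i _ => Finset.sum_nonneg fun j _ => mul_nonneg (hP i j) (hC i j)

lemma sum_row_E {n m : ℕ} (r : Fin n) (c : Fin m) (x : Fin n) :
    ∑ y, (if x = r ∧ y = c then (1:ℝ) else 0) = if x = r then 1 else 0 := by
  by_cases h : x = r <;> simp [h]

lemma sum_col_E {n m : ℕ} (r : Fin n) (c : Fin m) (y : Fin m) :
    ∑ x, (if x = r ∧ y = c then (1:ℝ) else 0) = if y = c then 1 else 0 := by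
  by_cases h : y = c <;> simp [h]

lemma dot_E {n m : ℕ} (r : Fin n) (c : Fin m) (C : Matrix (Fin n) (Fin m) ℝ) :
    ∑ x, ∑ y, (if x = r ∧ y = c then (1:ℝ) else 0) * C x y = C r c := by
  simp [ite_and, ite_mul]

lemma sum_E_mul {N n m : ℕ} (S : Finset (Fin N)) (r : Fin N → Fin n) (c : Fin N → Fin m)
    (C : Matrix (Fin n) (Fin m) ℝ) :
    ∑ x, ∑ y, (∑ k ∈ S, (if x = r k ∧ y = c k then (1:ℝ) else 0)) * C x y
      = ∑ k ∈ S, C (r k) (c k) := by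
  simp only [Finset.sum_mul]
  calc ∑ x, ∑ y, ∑ k ∈ S, (if x = r k ∧ y = c k then (1:ℝ) else 0) * C x y
      = ∑ x, ∑ k ∈ S, ∑ y, (if x = r k ∧ y = c k then (1:ℝ) else 0) * C x y :=
        Finset.sum_congr rfl fun x _ => Finset.sum_comm
    _ = ∑ k ∈ S, ∑ x, ∑ y, (if x = r k ∧ y = c k then (1:ℝ) else 0) * C x y :=
        Finset.sum_comm
    _ = ∑ k ∈ S, C (r k) (c k) := Finset.sum_congr rfl fun k _ => dot_E (r k) (c k) C

/-- With strictly positive costs and positive marginals, any minimizer of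
`max_i ⟨P_i,C_i⟩` over `Γ^N_{a,b}` equalizes all agents' costs. -/
theorem stmt_6 (N n m : ℕ) (hN : 0 < N) (a : Fin n → ℝ) (b : Fin m → ℝ)
    (ha : a ∈ stdSimplex ℝ (Fin n)) (hb : b ∈ stdSimplex ℝ (Fin m))
    (ha0 : ∀ i, 0 < a i) (hb0 : ∀ j, 0 < b j)
    (C : Fin N → Matrix (Fin n) (Fin m) ℝ) (hC : ∀ i k l, 0 < C i k l)
    (P : Fin N → Matrix (Fin n) (Fin m) ℝ) (hP : P ∈ Gamma N a b)
    (hopt : ∀ Q ∈ Gamma N a b,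
      (⨆ i, dot (P i) (C i)) ≤ ⨆ i, dot (Q i) (C i)) :
    ∀ i j, dot (P i) (C i) = dot (P j) (C j) := by
  classical
  haveI : Nonempty (Fin N) := ⟨⟨0, hN⟩⟩
  obtain ⟨hPnn, hPa, hPb⟩ := hP
  set d : Fin N → ℝ := fun k => dot (P k) (C k) with hd
  have hd0 : ∀ k, 0 ≤ d k := fun k =>
    dot_nonneg' (hPnn k) (fun x y => (hC k x y).le)
  obtain ⟨i0, hi0⟩ := Finite.exists_max d
  have hMsup : (⨆ k, d k) = d i0 :=
    le_antisymm (ciSup_le hi0) (le_ciSup (Set.finite_range d).bddAbove i0)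
  suffices h : ∀ k, d k = d i0 by intro i j; exact (h i).trans (h j).symm
  by_contra hcon
  push_neg at hcon
  obtain ⟨j, hj⟩ := hcon
  have hjlt : d j < d i0 := lt_of_le_of_ne (hi0 j) hj
  have hMpos : 0 < d i0 := lt_of_le_of_lt (hd0 j) hjlt
  have hpos : ∀ k, 0 < d k → ∃ r c, 0 < P k r c := by
    intro k hk
    by_contra h
    push_neg at h
    have hz : ∀ r c, P k r c = 0 := fun r c => le_antisymm (h r c) (hPnn k r c)
    have : d k = 0 := by simp [hd, dot, hz]
    linarith
  obtain ⟨r0, c0, _⟩ := hpos i0 hMpos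
  set S : Finset (Fin N) := univ.filter (fun k => d j < d k) with hS
  have hi0S : i0 ∈ S := by simp [hS, hjlt]
  have hjS : j ∉ S := by simp [hS]
  have hchoice : ∀ k, ∃ r c, k ∈ S → 0 < P k r c := by
    intro k
    by_cases hk : k ∈ S
    · obtain ⟨r, c, h⟩ := hpos k (lt_of_le_of_lt (hd0 j) ((mem_filter.mp hk).2))
      exact ⟨r, c, fun _ => h⟩
    · exact ⟨r0, c0, fun h => absurd h hk⟩
  choose r c hrc using hchoice
  set B : ℝ := ∑ k ∈ S, C j (r k) (c k) with hB
  have hB0 : 0 ≤ B := Finset.sum_nonneg fun k _ => (hC j (r k) (c k)).le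
  set ε : ℝ := min ((d i0 - d j) / (2 * (B + 1))) (S.inf' ⟨i0, hi0S⟩ fun k => P k (r k) (c k))
    with hε
  have hεpos : 0 < ε := by
    apply lt_min
    · apply div_pos (by linarith) (by linarith)
    · exact (Finset.lt_inf'_iff ..).2 fun k hk => hrc k hk
  have hεle : ∀ k ∈ S, ε ≤ P k (r k) (c k) := fun k hk =>
    le_trans (min_le_right _ _) (Finset.inf'_le _ hk)
  have hεB : d j + ε * B < d i0 := by
    have h1 : ε ≤ (d i0 - d j) / (2 * (B + 1)) := min_le_left _ _
    have h2 : ε * (2 * (B + 1)) ≤ d i0 - d j := by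
      rw [← le_div_iff₀ (by linarith)]; exact h1
    nlinarith
  -- the modified plan
  set Q : Fin N → Matrix (Fin n) (Fin m) ℝ := fun k => fun x y =>
    P k x y - (if k ∈ S then ε * (if x = r k ∧ y = c k then 1 else 0) else 0)
      + (if k = j then ε * ∑ k' ∈ S, (if x = r k' ∧ y = c k' then (1:ℝ) else 0) else 0)
    with hQ
  have hQapp : ∀ k x y, Q k x y =
      P k x y - (if k ∈ S then ε * (if x = r k ∧ y = c k then 1 else 0) else 0)
      + (if k = j then ε * ∑ k' ∈ S, (if x = r k' ∧ y = c k' then (1:ℝ) else 0) else 0) :=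
    fun k x y => rfl
  have hQGamma : Q ∈ Gamma N a b := by
    refine ⟨?_, ?_, ?_⟩
    · intro k x y
      rw [hQapp]
      have hadd : 0 ≤ (if k = j then ε * ∑ k' ∈ S, (if x = r k' ∧ y = c k' then (1:ℝ) else 0) else 0) := by
        split
        · exact mul_nonneg hεpos.le (Finset.sum_nonneg fun k' _ => by positivity)
        · exact le_refl 0
      by_cases hk : k ∈ S
      · rw [if_pos hk]
        by_cases hxy : x = r k ∧ y = c k
        · rw [if_pos hxy]
          obtain ⟨hx, hy⟩ := hxy
          subst hx; subst hy
          have := hεle k hk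
          linarith
        · rw [if_neg hxy]
          have := hPnn k x y
          linarith
      · rw [if_neg hk]
        have := hPnn k x y
        linarith
    · intro x
      have key : ∀ k, ∑ y, Q k x y = (∑ y, P k x y)
          - (if k ∈ S then ε * (if x = r k then 1 else 0) else 0)
          + (if k = j then ε * ∑ k' ∈ S, (if x = r k' then (1:ℝ) else 0) else 0) := by
        intro k
        by_cases hkj : k = j
        · subst hkj
          simp only [hQapp, hjS, eq_self_iff_true, if_true, if_false, ite_true, ite_false,
            Finset.sum_add_distrib, Finset.sum_sub_distrib, Finset.sum_const_zero,
            ← Finset.mul_sum, sub_zero,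
            Finset.sum_comm (s := (univ : Finset (Fin m))) (t := S), sum_row_E]
        · by_cases hkS : k ∈ S <;>
            simp only [hQapp, hkS, hkj, if_true, if_false, ite_true, ite_false,
              Finset.sum_add_distrib, Finset.sum_sub_distrib, Finset.sum_const_zero,
              ← Finset.mul_sum, sum_row_E, add_zero, sub_zero]
      simp only [key, Finset.sum_add_distrib, Finset.sum_sub_distrib]
      rw [hPa x]
      have h1 : ∑ k, (if k ∈ S then ε * (if x = r k then (1:ℝ) else 0) else 0)
          = ∑ k ∈ S, ε * (if x = r k then (1:ℝ) else 0) := by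
        rw [Finset.sum_ite_mem, Finset.univ_inter]
      have h2 : ∑ k, (if k = j then ε * ∑ k' ∈ S, (if x = r k' then (1:ℝ) else 0) else 0)
          = ε * ∑ k' ∈ S, (if x = r k' then (1:ℝ) else 0) := by
        rw [Finset.sum_ite_eq' univ j]
        simp
      rw [h1, h2, Finset.mul_sum]
      ring
    · intro y
      have key : ∀ k, ∑ x, Q k x y = (∑ x, P k x y)
          - (if k ∈ S then ε * (if y = c k then 1 else 0) else 0)
          + (if k = j then ε * ∑ k' ∈ S, (if y = c k' then (1:ℝ) else 0) else 0) := by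
        intro k
        by_cases hkj : k = j
        · subst hkj
          simp only [hQapp, hjS, eq_self_iff_true, if_true, if_false, ite_true, ite_false,
            Finset.sum_add_distrib, Finset.sum_sub_distrib, Finset.sum_const_zero,
            ← Finset.mul_sum, sub_zero,
            Finset.sum_comm (s := (univ : Finset (Fin n))) (t := S), sum_col_E]
        · by_cases hkS : k ∈ S <;>
            simp only [hQapp, hkS, hkj, if_true, if_false, ite_true, ite_false,
              Finset.sum_add_distrib, Finset.sum_sub_distrib, Finset.sum_const_zero,
              ← Finset.mul_sum, sum_col_E, add_zero, sub_zero]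
      simp only [key, Finset.sum_add_distrib, Finset.sum_sub_distrib]
      rw [hPb y]
      have h1 : ∑ k, (if k ∈ S then ε * (if y = c k then (1:ℝ) else 0) else 0)
          = ∑ k ∈ S, ε * (if y = c k then (1:ℝ) else 0) := by
        rw [Finset.sum_ite_mem, Finset.univ_inter]
      have h2 : ∑ k, (if k = j then ε * ∑ k' ∈ S, (if y = c k' then (1:ℝ) else 0) else 0)
          = ε * ∑ k' ∈ S, (if y = c k' then (1:ℝ) else 0) := by
        rw [Finset.sum_ite_eq' univ j]
        simp
      rw [h1, h2, Finset.mul_sum]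
      ring
  -- compute the new costs
  have hdotQ : ∀ k, dot (Q k) (C k) = d k
      - (if k ∈ S then ε * C k (r k) (c k) else 0)
      + (if k = j then ε * ∑ k' ∈ S, C k (r k') (c k') else 0) := by
    intro k
    by_cases hkj : k = j
    · subst hkj
      simp only [dot, hQapp, hjS, eq_self_iff_true, if_true, if_false, ite_true, ite_false,
        sub_zero, add_mul, Finset.sum_add_distrib, mul_assoc, ← Finset.mul_sum]
      rw [sum_E_mul S r c (C k)]
      rfl
    · by_cases hkS : k ∈ S
      · simp only [dot, hQapp, hkS, hkj, if_true, if_false, ite_true, ite_false, add_zero,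
          sub_mul, Finset.sum_sub_distrib, mul_assoc, ← Finset.mul_sum, dot_E]
        rfl
      · simp only [dot, hQapp, hkS, hkj, if_true, if_false, ite_true, ite_false, sub_zero,
          add_zero]
        rfl
  -- final contradiction
  have hlt : ∀ k, dot (Q k) (C k) < d i0 := by
    intro k
    have hk := hdotQ k
    by_cases hkS : k ∈ S
    · have hkj : k ≠ j := fun h => hjS (h ▸ hkS)
      rw [hk, if_pos hkS, if_neg hkj]
      have h1 : 0 < ε * C k (r k) (c k) := mul_pos hεpos (hC k _ _)
      have h2 := hi0 k
      linarith
    · by_cases hkj : k = j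
      · subst hkj
        rw [hk, if_neg hkS, if_pos rfl, ← hB]
        linarith
      · rw [hk, if_neg hkS, if_neg hkj]
        have hle : d k ≤ d j := le_of_not_gt (by simpa [hS] using hkS)
        linarith
  obtain ⟨k1, hk1⟩ := Finite.exists_max (fun k => dot (Q k) (C k))
  have hsup' : (⨆ i, dot (Q i) (C i)) ≤ dot (Q k1) (C k1) := ciSup_le hk1
  have h2 : (⨆ i, dot (Q i) (C i)) < d i0 := lt_of_le_of_lt hsup' (hlt k1)
  have hfinal := hopt Q hQGamma
  have hcontra : d i0 < d i0 := by
    calc d i0 = ⨆ k, d k := hMsup.symm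
      _ ≤ ⨆ i, dot (Q i) (C i) := hfinal
      _ < d i0 := h2
  exact absurd hcontra (lt_irrefl _)
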